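/- For every k ≥ 0, the assigned vector 𝒮(p_k) is well defined and equals R_{(a,b),(c,d)} for a unique quadruple with c, d ≥ 1, a+c ≤ t, b+d ≤ U and a = 0 or b = 0; moreover, writing 𝒮(p_{k+1}) = R_{(a,b),(c,d)}, one has R_{δ(a,b,c,d)} − 𝒮(p_k) ∈ F. That is, applying the rectangle rule δ to the vector assigned to p_{k+1} recovers the vector assigned to p_k modulo the frozen subgroup F (the lattice path tracks the inverse rectangle dynamics). -/
import Mathlib


namespace Stmt14

/-- First component of `κ(x, y)`: `i` if `⌈x/t⌉` is odd, `i^c = t - i` otherwise. -/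
def kap1 (t i x : ℕ) : ℕ := if ((x + t - 1) / t) % 2 = 1 then i else t - i

/-- Second component of `κ(x, y)`: `j` if `⌈y/U⌉` is odd, `j^c = U - j` otherwise. -/
def kap2 (U j y : ℕ) : ℕ := if ((y + U - 1) / U) % 2 = 1 then j else U - j

/-- One step of the lattice-path recursion: from `p_k` produce `p_{k+1}`. -/
def next (t U i j : ℕ) (P : ℕ × ℕ) : ℕ × ℕ :=
  if t ∣ P.1 ∧ U ∣ P.2 then
    (P.1 + (t - kap1 t i P.1), P.2 + (U - kap2 U j P.2))
  else
    let s := min (t - P.1 % t) (U - P.2 % U)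
    let u := P.1 + s
    let v := P.2 + s
    if t ∣ u ∧ ¬U ∣ v then (u + (if (u / t) % 2 = 1 then t - i else i), v)
    else if U ∣ v ∧ ¬t ∣ u then (u, v + (if (v / U) % 2 = 1 then U - j else j))
    else (u, v)

/-- The sequence of points `p_0 = (i, j)`, `p_{k+1} = next p_k`. -/
def path (t U i j : ℕ) : ℕ → ℕ × ℕ
  | 0 => (i, j)
  | k + 1 => next t U i j (path t U i j k)

/-- `V = ℤ^B`, vectors indexed by the (1-indexed) boxes of the `t × U` rectangle. -/
abbrev V : Type := ℕ × ℕ → ℤ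

/-- `R_{(a,b),(c,d)} = ∑_{a < i' ≤ a+c, b < j' ≤ b+d} e_{(i',j')}`. -/
def R (a b c d : ℕ) : V := fun q =>
  if a < q.1 ∧ q.1 ≤ a + c ∧ b < q.2 ∧ q.2 ≤ b + d then 1 else 0

/-- `R` applied to a quadruple. -/
def Rq (q : ℕ × ℕ × ℕ × ℕ) : V := R q.1 q.2.1 q.2.2.1 q.2.2.2

/-- The subgroup `F` generated by the frozen vectors `R_{(0,0),(c,U)}` (`1 ≤ c ≤ t`)
and `R_{(0,0),(t,d)}` (`1 ≤ d ≤ U`). -/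
def frozen (t U : ℕ) : AddSubgroup V :=
  AddSubgroup.closure
    ({v | ∃ c, 1 ≤ c ∧ c ≤ t ∧ v = R 0 0 c U} ∪ {v | ∃ d, 1 ≤ d ∧ d ≤ U ∧ v = R 0 0 t d})

/-- The rectangle rule `δ` on quadruples `(a,b,c,d)` with `a = 0` or `b = 0`. -/
def delta (t U : ℕ) : ℕ × ℕ × ℕ × ℕ → ℕ × ℕ × ℕ × ℕ
  | (a, b, c, d) =>
    if a = 0 then (c - min b c, b - min b c, t - c, d)
    else (a - min a d, d - min a d, c, U - d)

/-- The vector `𝒮(p)` assigned to a point `p = (x, y)`: if `t ∤ x` and `U ∤ y` then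
`R_{(x̄ - p, ȳ - q),(p,q)}` with `(p,q) = κ(x,y)`; if `t ∣ x` and `U ∣ y` then
`R_{(0, U - q),(t - p, q)}`. -/
def SVec (t U i j : ℕ) (P : ℕ × ℕ) : V :=
  if t ∣ P.1 ∧ U ∣ P.2 then
    R 0 (U - kap2 U j P.2) (t - kap1 t i P.1) (kap2 U j P.2)
  else
    R (P.1 % t - kap1 t i P.1) (P.2 % U - kap2 U j P.2) (kap1 t i P.1) (kap2 U j P.2)

/-- Admissible quadruples: `c, d ≥ 1`, `a + c ≤ t`, `b + d ≤ U`, and `a = 0` or `b = 0`. -/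
def good (t U : ℕ) (q : ℕ × ℕ × ℕ × ℕ) : Prop :=
  1 ≤ q.2.2.1 ∧ 1 ≤ q.2.2.2 ∧ q.1 + q.2.2.1 ≤ t ∧ q.2.1 + q.2.2.2 ≤ U ∧
    (q.1 = 0 ∨ q.2.1 = 0)

/-! ### Auxiliary arithmetic lemmas -/

lemma div_mod_spec {t x k r : ℕ} (hr : r < t) (h : x = t * k + r) :
    x / t = k ∧ x % t = r := by
  subst h
  have ht : 0 < t := by omega
  refine ⟨?_, ?_⟩
  · rw [Nat.mul_add_div ht, Nat.div_eq_of_lt hr]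
    omega
  · rw [Nat.mul_add_mod, Nat.mod_eq_of_lt hr]

lemma ceil_dvd {t x : ℕ} (ht : 0 < t) (h : t ∣ x) : (x + t - 1) / t = x / t := by
  obtain ⟨k, rfl⟩ := h
  have e : t * k + t - 1 = t * k + (t - 1) := by omega
  rw [e, (div_mod_spec (by omega : t - 1 < t) rfl).1, Nat.mul_div_cancel_left k ht]

lemma ceil_not_dvd {t x : ℕ} (ht : 0 < t) (h : ¬ t ∣ x) : (x + t - 1) / t = x / t + 1 := by
  have h0 : x % t ≠ 0 := fun hh => h (Nat.dvd_of_mod_eq_zero hh)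
  have h1 : x % t < t := Nat.mod_lt _ ht
  have h2 : x % t + t * (x / t) = x := Nat.mod_add_div x t
  have e : x + t - 1 = t * (x / t + 1) + (x % t - 1) := by
    have : t * (x / t + 1) = t * (x / t) + t := by ring
    omega
  exact (div_mod_spec (by omega) e).1

lemma trans_from_div {t x e : ℕ} (hx : t ∣ x) (he0 : 0 < e) (het : e < t) :
    (x + e) % t = e ∧ ¬ t ∣ (x + e) ∧ (x + e + t - 1) / t = (x + t - 1) / t + 1 := by
  have ht : 0 < t := by omega
  obtain ⟨k, rfl⟩ := hx
  obtain ⟨hd, hm⟩ := div_mod_spec het (rfl : t * k + e = t * k + e)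
  have hnd : ¬ t ∣ (t * k + e) := fun hdd => by
    have := Nat.mod_eq_zero_of_dvd hdd
    omega
  refine ⟨hm, hnd, ?_⟩
  rw [ceil_not_dvd ht hnd, ceil_dvd ht ⟨k, rfl⟩, hd, Nat.mul_div_cancel_left k ht]

lemma trans_within {t x s : ℕ} (ht : 0 < t) (hx : ¬ t ∣ x) (hs : x % t + s < t) :
    (x + s) % t = x % t + s ∧ ¬ t ∣ (x + s) ∧ (x + s + t - 1) / t = (x + t - 1) / t := by
  have h2 : x % t + t * (x / t) = x := Nat.mod_add_div x t
  have h0 : x % t ≠ 0 := fun hh => hx (Nat.dvd_of_mod_eq_zero hh)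
  obtain ⟨hd, hm⟩ := div_mod_spec hs (by omega : x + s = t * (x / t) + (x % t + s))
  have hnd : ¬ t ∣ (x + s) := fun hdd => by
    have := Nat.mod_eq_zero_of_dvd hdd
    omega
  refine ⟨hm, hnd, ?_⟩
  rw [ceil_not_dvd ht hnd, ceil_not_dvd ht hx, hd]

lemma trans_to_div {t x : ℕ} (ht : 0 < t) (hx : ¬ t ∣ x) :
    t ∣ (x + (t - x % t)) ∧ (x + (t - x % t)) / t = (x + t - 1) / t ∧
      (x + (t - x % t) + t - 1) / t = (x + t - 1) / t := by
  have h2 : x % t + t * (x / t) = x := Nat.mod_add_div x t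
  have h1 : x % t < t := Nat.mod_lt _ ht
  have he : x + (t - x % t) = t * (x / t + 1) := by
    have : t * (x / t + 1) = t * (x / t) + t := by ring
    omega
  have hd : t ∣ (x + (t - x % t)) := ⟨x / t + 1, he⟩
  have hq : (x + (t - x % t)) / t = (x + t - 1) / t := by
    rw [he, Nat.mul_div_cancel_left _ ht, ceil_not_dvd ht hx]
  exact ⟨hd, hq, by rw [ceil_dvd ht hd, hq]⟩

/-! ### kap lemmas -/

lemma kap2_eq_kap1 (U j y : ℕ) : kap2 U j y = kap1 U j y := rfl

lemma kap1_bounds {t i : ℕ} (hi0 : 0 < i) (hit : i < t) (x : ℕ) :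
    0 < kap1 t i x ∧ kap1 t i x < t := by
  unfold kap1; split <;> omega

lemma kap1_flip {t i x x' : ℕ} (hit : i ≤ t)
    (h : (x' + t - 1) / t = (x + t - 1) / t + 1) :
    kap1 t i x' = t - kap1 t i x := by
  unfold kap1
  rw [h]
  by_cases hm : (x + t - 1) / t % 2 = 1
  · rw [if_neg (by omega), if_pos hm]
  · rw [if_pos (by omega), if_neg hm]; omega

lemma kap1_same {t i x x' : ℕ} (h : (x' + t - 1) / t = (x + t - 1) / t) :
    kap1 t i x' = kap1 t i x := by unfold kap1; rw [h]

lemma kap1_self {t i : ℕ} (hi0 : 0 < i) (hit : i < t) : kap1 t i i = i := by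
  have : (i + t - 1) / t = 1 :=
    (div_mod_spec (t := t) (k := 1) (r := i - 1) (by omega) (by omega)).1
  unfold kap1; rw [this]
  norm_num

/-! ### frozen membership -/

lemma col_mem {t U c : ℕ} (hc : c ≤ t) : (R 0 0 c U : V) ∈ frozen t U := by
  rcases Nat.eq_zero_or_pos c with rfl | hc0
  · have e : (R 0 0 0 U : V) = 0 := by
      funext z; simp only [R, Pi.zero_apply]; rw [if_neg (by omega)]
    rw [e]; exact zero_mem _
  · exact AddSubgroup.subset_closure (Or.inl ⟨c, hc0, hc, rfl⟩)

lemma row_mem {t U d : ℕ} (hd : d ≤ U) : (R 0 0 t d : V) ∈ frozen t U := by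
  rcases Nat.eq_zero_or_pos d with rfl | hd0
  · have e : (R 0 0 t 0 : V) = 0 := by
      funext z; simp only [R, Pi.zero_apply]; rw [if_neg (by omega)]
    rw [e]; exact zero_mem _
  · exact AddSubgroup.subset_closure (Or.inr ⟨d, hd0, hd, rfl⟩)

lemma vstrip_mem {t U a c : ℕ} (h : a + c ≤ t) : (R a 0 c U : V) ∈ frozen t U := by
  have e : (R a 0 c U : V) = R 0 0 (a + c) U - R 0 0 a U := by
    funext z; simp only [R, Pi.sub_apply]; split_ifs <;> omega
  rw [e]; exact sub_mem (col_mem (by omega)) (col_mem (by omega))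

lemma hstrip_mem {t U b d : ℕ} (h : b + d ≤ U) : (R 0 b t d : V) ∈ frozen t U := by
  have e : (R 0 b t d : V) = R 0 0 t (b + d) - R 0 0 t b := by
    funext z; simp only [R, Pi.sub_apply]; split_ifs <;> omega
  rw [e]; exact sub_mem (row_mem (by omega)) (row_mem (by omega))

/-! ### injectivity -/

lemma R_inj {a b c d a' b' c' d' : ℕ} (hc : 1 ≤ c) (hd : 1 ≤ d)
    (hc' : 1 ≤ c') (hd' : 1 ≤ d') (h : (R a b c d : V) = R a' b' c' d') :
    a = a' ∧ b = b' ∧ c = c' ∧ d = d' := by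
  have e1 := congrFun h (a + 1, b + 1)
  have e2 := congrFun h (a' + 1, b' + 1)
  have e3 := congrFun h (a + c, b + d)
  have e4 := congrFun h (a' + c', b' + d')
  simp only [R] at e1 e2 e3 e4
  split_ifs at e1 e2 e3 e4 <;> omega

lemma Rq_inj {t U : ℕ} {q q' : ℕ × ℕ × ℕ × ℕ} (hg : good t U q) (hg' : good t U q')
    (h : Rq q = Rq q') : q = q' := by
  obtain ⟨a, b, c, d⟩ := q
  obtain ⟨a', b', c', d'⟩ := q'
  obtain ⟨h1, h2, h3, h4⟩ := R_inj hg.1 hg.2.1 hg'.1 hg'.2.1 h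
  simp_all

/-! ### the canonical quadruple and the invariant -/

def quad (t U i j : ℕ) (P : ℕ × ℕ) : ℕ × ℕ × ℕ × ℕ :=
  if t ∣ P.1 ∧ U ∣ P.2 then
    (0, U - kap2 U j P.2, t - kap1 t i P.1, kap2 U j P.2)
  else
    (P.1 % t - kap1 t i P.1, P.2 % U - kap2 U j P.2, kap1 t i P.1, kap2 U j P.2)

lemma SVec_eq_quad (t U i j : ℕ) (P : ℕ × ℕ) :
    SVec t U i j P = Rq (quad t U i j P) := by
  unfold SVec quad
  split <;> rfl

def Inv (t U i j : ℕ) (P : ℕ × ℕ) : Prop :=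
  0 < P.1 ∧ 0 < P.2 ∧
    ((t ∣ P.1 ∧ U ∣ P.2) ∨
      (¬ t ∣ P.1 ∧ ¬ U ∣ P.2 ∧ kap1 t i P.1 ≤ P.1 % t ∧ kap2 U j P.2 ≤ P.2 % U ∧
        (P.1 % t = kap1 t i P.1 ∨ P.2 % U = kap2 U j P.2)))

lemma Inv_init {t U i j : ℕ} (hi0 : 0 < i) (hit : i < t) (hj0 : 0 < j) (hjU : j < U) :
    Inv t U i j (i, j) := by
  refine ⟨hi0, hj0, Or.inr ⟨?_, ?_, ?_, ?_, Or.inl ?_⟩⟩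
  · exact fun h => by have := Nat.le_of_dvd hi0 h; omega
  · exact fun h => by have := Nat.le_of_dvd hj0 h; omega
  · rw [Nat.mod_eq_of_lt hit, kap1_self hi0 hit]
  · rw [kap2_eq_kap1, Nat.mod_eq_of_lt hjU, kap1_self hj0 hjU]
  · rw [Nat.mod_eq_of_lt hit, kap1_self hi0 hit]

lemma good_quad {t U i j : ℕ} (hi0 : 0 < i) (hit : i < t) (hj0 : 0 < j) (hjU : j < U)
    {P : ℕ × ℕ} (h : Inv t U i j P) : good t U (quad t U i j P) := by
  obtain ⟨hx0, hy0, hc⟩ := h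
  have ht : 0 < t := by omega
  have hU : 0 < U := by omega
  obtain ⟨hk1, hk1'⟩ := kap1_bounds hi0 hit P.1
  have hk2b : 0 < kap2 U j P.2 ∧ kap2 U j P.2 < U := by
    rw [kap2_eq_kap1]; exact kap1_bounds hj0 hjU P.2
  obtain ⟨hk2, hk2'⟩ := hk2b
  have hm1 : P.1 % t < t := Nat.mod_lt _ ht
  have hm2 : P.2 % U < U := Nat.mod_lt _ hU
  rcases hc with ⟨h1, h2⟩ | ⟨h1, h2, h3, h4, h5⟩
  · rw [quad, if_pos ⟨h1, h2⟩]
    simp only [good, true_or, and_true, true_and, or_true]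
    omega
  · rw [quad, if_neg (fun hh => h1 hh.1)]
    simp only [good]
    omega

/-! ### the main step lemma -/

lemma step {t U i j : ℕ} (hi0 : 0 < i) (hit : i < t) (hj0 : 0 < j) (hjU : j < U)
    {P : ℕ × ℕ} (h : Inv t U i j P) :
    Inv t U i j (next t U i j P) ∧
      Rq (delta t U (quad t U i j (next t U i j P))) - Rq (quad t U i j P)
        ∈ frozen t U := by
  obtain ⟨x, y⟩ := P
  obtain ⟨hx0, hy0, hc⟩ := h
  dsimp only at hx0 hy0 hc
  have ht : 0 < t := by omega
  have hU : 0 < U := by omega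
  obtain ⟨hp0, hpt⟩ := kap1_bounds hi0 hit x
  have hqb : 0 < kap2 U j y ∧ kap2 U j y < U := by
    rw [kap2_eq_kap1]; exact kap1_bounds hj0 hjU y
  obtain ⟨hq0, hqU⟩ := hqb
  rcases hc with ⟨hdx, hdy⟩ | ⟨hdx, hdy, hax, hby, heq⟩
  · -- Case A : both divisible
    have hnext : next t U i j (x, y)
        = (x + (t - kap1 t i x), y + (U - kap2 U j y)) := by
      rw [next, if_pos ⟨hdx, hdy⟩]
    obtain ⟨hm1, hnd1, hc1⟩ := trans_from_div hdx (e := t - kap1 t i x) (by omega) (by omega)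
    obtain ⟨hm2, hnd2, hc2⟩ := trans_from_div hdy (e := U - kap2 U j y) (by omega) (by omega)
    have hk1 : kap1 t i (x + (t - kap1 t i x)) = t - kap1 t i x := kap1_flip (by omega) hc1
    have hk2 : kap2 U j (y + (U - kap2 U j y)) = U - kap2 U j y :=
      kap1_flip (by omega) hc2
    refine ⟨?_, ?_⟩
    · rw [hnext]
      refine ⟨by omega, by omega, Or.inr ⟨hnd1, hnd2, ?_, ?_, Or.inl ?_⟩⟩
      · rw [hk1, hm1]
      · rw [hk2, hm2]
      · rw [hk1, hm1]
    · rw [hnext]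
      have hqn : quad t U i j (x + (t - kap1 t i x), y + (U - kap2 U j y))
          = (0, 0, t - kap1 t i x, U - kap2 U j y) := by
        rw [quad, if_neg (fun hh => hnd1 hh.1)]
        dsimp only
        rw [hm1, hk1, hm2, hk2]
        simp
      have hqP : quad t U i j (x, y)
          = (0, U - kap2 U j y, t - kap1 t i x, kap2 U j y) := by
        rw [quad, if_pos ⟨hdx, hdy⟩]
      rw [hqn, hqP]
      have hdelta : delta t U (0, 0, t - kap1 t i x, U - kap2 U j y)
          = (t - kap1 t i x, 0, kap1 t i x, U - kap2 U j y) := by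
        simp only [delta, if_true, true_and, and_true, Prod.mk.injEq]
        omega
      rw [hdelta]
      have key : (Rq (t - kap1 t i x, 0, kap1 t i x, U - kap2 U j y)
            - Rq (0, U - kap2 U j y, t - kap1 t i x, kap2 U j y) : V)
          = R (t - kap1 t i x) 0 (kap1 t i x) U - R 0 (U - kap2 U j y) t (kap2 U j y) := by
        funext z
        simp only [Rq, R, Pi.sub_apply]
        split_ifs <;> omega
      rw [key]
      exact sub_mem (vstrip_mem (by omega)) (hstrip_mem (by omega))
  · -- Case B : neither divisible
    have hmx : x % t < t := Nat.mod_lt _ ht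
    have hmy : y % U < U := Nat.mod_lt _ hU
    have hmx0 : x % t ≠ 0 := fun hh => hdx (Nat.dvd_of_mod_eq_zero hh)
    have hmy0 : y % U ≠ 0 := fun hh => hdy (Nat.dvd_of_mod_eq_zero hh)
    rcases lt_trichotomy (t - x % t) (U - y % U) with hlt | heqs | hgt
    · -- 2a : hit a vertical line first
      have hs : min (t - x % t) (U - y % U) = t - x % t := min_eq_left (le_of_lt hlt)
      obtain ⟨hud, huc, hucc⟩ := trans_to_div ht hdx
      obtain ⟨hvm, hvnd, hvc⟩ := trans_within hU hdy (by omega : y % U + (t - x % t) < U)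
      have hι : (if (x + (t - x % t)) / t % 2 = 1 then t - i else i) = t - kap1 t i x := by
        rw [huc]
        unfold kap1
        by_cases hb : (x + t - 1) / t % 2 = 1
        · rw [if_pos hb, if_pos hb]
        · rw [if_neg hb, if_neg hb]; omega
      have hnext : next t U i j (x, y)
          = (x + (t - x % t) + (t - kap1 t i x), y + (t - x % t)) := by
        rw [next, if_neg (fun hh => hdx hh.1)]
        simp only [hs]
        rw [if_pos ⟨hud, hvnd⟩, hι]
      obtain ⟨hm1, hnd1, hc1⟩ := trans_from_div hud (e := t - kap1 t i x) (by omega) (by omega)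
      have hc1' : (x + (t - x % t) + (t - kap1 t i x) + t - 1) / t = (x + t - 1) / t + 1 := by
        rw [hc1, hucc]
      have hk1 : kap1 t i (x + (t - x % t) + (t - kap1 t i x)) = t - kap1 t i x :=
        kap1_flip (by omega) hc1'
      have hk2 : kap2 U j (y + (t - x % t)) = kap2 U j y := by
        rw [kap2_eq_kap1, kap2_eq_kap1]
        exact kap1_same hvc
      rw [hnext]
      refine ⟨⟨by omega, by omega, Or.inr ⟨hnd1, hvnd, ?_, ?_, Or.inl ?_⟩⟩, ?_⟩
      · rw [hk1, hm1]
      · rw [hk2, hvm]; omega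
      · rw [hk1, hm1]
      · have hqn : quad t U i j (x + (t - x % t) + (t - kap1 t i x), y + (t - x % t))
            = (0, y % U + (t - x % t) - kap2 U j y, t - kap1 t i x, kap2 U j y) := by
          rw [quad, if_neg (fun hh => hnd1 hh.1)]
          dsimp only
          rw [hm1, hk1, hvm, hk2]
          simp
        have hqP : quad t U i j (x, y)
            = (x % t - kap1 t i x, y % U - kap2 U j y, kap1 t i x, kap2 U j y) := by
          rw [quad, if_neg (fun hh => hdx hh.1)]
        rw [hqn, hqP]
        have hdq : delta t U
              (0, y % U + (t - x % t) - kap2 U j y, t - kap1 t i x, kap2 U j y)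
            = (x % t - kap1 t i x, y % U - kap2 U j y, kap1 t i x, kap2 U j y) := by
          simp only [delta, if_true, true_and, and_true, Prod.mk.injEq]
          omega
        rw [hdq, sub_self]
        exact zero_mem _
    · -- 2c : hit a crossing point
      have hs : min (t - x % t) (U - y % U) = t - x % t := by omega
      obtain ⟨hud, huc, hucc⟩ := trans_to_div ht hdx
      obtain ⟨hvd, hvc, hvcc⟩ := trans_to_div hU hdy
      have hyeq : y + (t - x % t) = y + (U - y % U) := by omega
      have hvd' : U ∣ (y + (t - x % t)) := by rw [hyeq]; exact hvd
      have hnext : next t U i j (x, y) = (x + (t - x % t), y + (t - x % t)) := by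
        rw [next, if_neg (fun hh => hdx hh.1)]
        simp only [hs]
        rw [if_neg (fun hh => hh.2 hvd'), if_neg (fun hh => hh.2 hud)]
      have hk1 : kap1 t i (x + (t - x % t)) = kap1 t i x := kap1_same hucc
      have hk2 : kap2 U j (y + (t - x % t)) = kap2 U j y := by
        rw [hyeq, kap2_eq_kap1, kap2_eq_kap1]
        exact kap1_same hvcc
      rw [hnext]
      refine ⟨⟨by omega, by omega, Or.inl ⟨hud, hvd'⟩⟩, ?_⟩
      have hqn : quad t U i j (x + (t - x % t), y + (t - x % t))
          = (0, U - kap2 U j y, t - kap1 t i x, kap2 U j y) := by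
        rw [quad, if_pos ⟨hud, hvd'⟩]
        dsimp only
        rw [hk1, hk2]
      have hqP : quad t U i j (x, y)
          = (x % t - kap1 t i x, y % U - kap2 U j y, kap1 t i x, kap2 U j y) := by
        rw [quad, if_neg (fun hh => hdx hh.1)]
      rw [hqn, hqP]
      have hdq : delta t U (0, U - kap2 U j y, t - kap1 t i x, kap2 U j y)
          = (x % t - kap1 t i x, y % U - kap2 U j y, kap1 t i x, kap2 U j y) := by
        simp only [delta, if_true, true_and, and_true, Prod.mk.injEq]
        omega
      rw [hdq, sub_self]
      exact zero_mem _
    · -- 2b : hit a horizontal line first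
      have hs : min (t - x % t) (U - y % U) = U - y % U := min_eq_right (le_of_lt hgt)
      obtain ⟨hvd, hvc, hvcc⟩ := trans_to_div hU hdy
      obtain ⟨hum, hund, huc⟩ := trans_within ht hdx (by omega : x % t + (U - y % U) < t)
      have hjj : (if (y + (U - y % U)) / U % 2 = 1 then U - j else j) = U - kap2 U j y := by
        rw [hvc, kap2_eq_kap1]
        unfold kap1
        by_cases hb : (y + U - 1) / U % 2 = 1
        · rw [if_pos hb, if_pos hb]
        · rw [if_neg hb, if_neg hb]; omega
      have hnext : next t U i j (x, y)
          = (x + (U - y % U), y + (U - y % U) + (U - kap2 U j y)) := by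
        rw [next, if_neg (fun hh => hdx hh.1)]
        simp only [hs]
        rw [if_neg (fun hh => hh.2 hvd), if_pos ⟨hvd, hund⟩, hjj]
      obtain ⟨hm2, hnd2, hc2⟩ := trans_from_div hvd (e := U - kap2 U j y) (by omega) (by omega)
      have hc2' : (y + (U - y % U) + (U - kap2 U j y) + U - 1) / U = (y + U - 1) / U + 1 := by
        rw [hc2, hvcc]
      have hk2 : kap2 U j (y + (U - y % U) + (U - kap2 U j y)) = U - kap2 U j y :=
        kap1_flip (by omega) hc2'
      have hk1 : kap1 t i (x + (U - y % U)) = kap1 t i x := kap1_same huc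
      rw [hnext]
      refine ⟨⟨by omega, by omega, Or.inr ⟨hund, hnd2, ?_, ?_, Or.inr ?_⟩⟩, ?_⟩
      · rw [hk1, hum]; omega
      · rw [hk2, hm2]
      · rw [hk2, hm2]
      · have hqn : quad t U i j (x + (U - y % U), y + (U - y % U) + (U - kap2 U j y))
            = (x % t + (U - y % U) - kap1 t i x, 0, kap1 t i x, U - kap2 U j y) := by
          rw [quad, if_neg (fun hh => hnd2 hh.2)]
          dsimp only
          rw [hum, hk1, hm2, hk2]
          simp
        have hqP : quad t U i j (x, y)
            = (x % t - kap1 t i x, y % U - kap2 U j y, kap1 t i x, kap2 U j y) := by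
          rw [quad, if_neg (fun hh => hdx hh.1)]
        rw [hqn, hqP]
        have hdq : delta t U
              (x % t + (U - y % U) - kap1 t i x, 0, kap1 t i x, U - kap2 U j y)
            = (x % t - kap1 t i x, y % U - kap2 U j y, kap1 t i x, kap2 U j y) := by
          simp only [delta]
          rw [if_neg (by omega : ¬(x % t + (U - y % U) - kap1 t i x = 0))]
          simp only [Prod.mk.injEq, true_and, and_true]
          omega
        rw [hdq, sub_self]
        exact zero_mem _

theorem stmt14 (n t i j : ℕ) (hn : 3 ≤ n) (ht2 : 2 ≤ t) (htn : t ≤ n - 1)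
    (hi0 : 0 < i) (hit : i < t) (hj0 : 0 < j) (hjU : j < n - t + 1) (k : ℕ) :
    -- `𝒮(p_k)` is well defined: `p_k` lies on both families of lines or on neither
    (t ∣ (path t (n - t + 1) i j k).1 ↔ (n - t + 1) ∣ (path t (n - t + 1) i j k).2) ∧
    -- `𝒮(p_k) = R_q` for a unique admissible quadruple `q`
    (∃! q : ℕ × ℕ × ℕ × ℕ, good t (n - t + 1) q ∧
      SVec t (n - t + 1) i j (path t (n - t + 1) i j k) = Rq q) ∧
    -- the rectangle rule applied to `𝒮(p_{k+1})` recovers `𝒮(p_k)` modulo `F`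
    (∀ q : ℕ × ℕ × ℕ × ℕ, good t (n - t + 1) q →
      SVec t (n - t + 1) i j (path t (n - t + 1) i j (k + 1)) = Rq q →
      Rq (delta t (n - t + 1) q) - SVec t (n - t + 1) i j (path t (n - t + 1) i j k)
        ∈ frozen t (n - t + 1)) := by
  set U := n - t + 1 with hUdef
  have hInv : ∀ k, Inv t U i j (path t U i j k) := by
    intro k
    induction k with
    | zero => exact Inv_init hi0 hit hj0 hjU
    | succ k ih => exact (step hi0 hit hj0 hjU ih).1
  refine ⟨?_, ?_, ?_⟩
  · obtain ⟨_, _, h⟩ := hInv k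
    rcases h with ⟨h1, h2⟩ | ⟨h1, h2, -⟩
    · exact ⟨fun _ => h2, fun _ => h1⟩
    · exact ⟨fun hh => absurd hh h1, fun hh => absurd hh h2⟩
  · refine ⟨quad t U i j (path t U i j k),
      ⟨good_quad hi0 hit hj0 hjU (hInv k), SVec_eq_quad t U i j _⟩, ?_⟩
    rintro q' ⟨hg', he'⟩
    exact Rq_inj hg' (good_quad hi0 hit hj0 hjU (hInv k))
      (by rw [← he', SVec_eq_quad])
  · intro q hg he
    have hq : q = quad t U i j (path t U i j (k + 1)) :=
      Rq_inj hg (good_quad hi0 hit hj0 hjU (hInv (k + 1)))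
        (by rw [← he, SVec_eq_quad])
    rw [hq, SVec_eq_quad t U i j (path t U i j k),
      show path t U i j (k + 1) = next t U i j (path t U i j k) from rfl]
    exact (step hi0 hit hj0 hjU (hInv k)).2


end Stmt14
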